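/- In the homogeneous-resource PPA-Game (all μ_k equal), if π' = (k', π_{-j}) is an improvement step of π with player j deviating from k to k', then W_k(π')/W_k(π) > W_{k'}(π)/W_{k'}(π'), where W_k(π) is the total weight on resource k; the denominators W_k(π), W_{k'}(π') are positive. -/

import Mathlib

open Finset

/-- Total weight on resource `k` under profile `π`. -/
noncomputable def Wt {N K : ℕ} (w : Fin N → Fin K → ℝ) (π : Fin N → Fin K) (k : Fin K) : ℝ :=
  ∑ j : Fin N, if π j = k then w j k else 0

/-- Utility of player `j` in the PPA-Game. -/
noncomputable def U {N K : ℕ} (μ : Fin K → ℝ) (w : Fin N → Fin K → ℝ)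
    (π : Fin N → Fin K) (j : Fin N) : ℝ :=
  if 0 < Wt w π (π j) then μ (π j) * w j (π j) / Wt w π (π j) else 0

/-- Pure Nash equilibrium of the PPA-Game. -/
def IsPNE {N K : ℕ} (μ : Fin K → ℝ) (w : Fin N → Fin K → ℝ) (π : Fin N → Fin K) : Prop :=
  ∀ j : Fin N, ∀ k' : Fin K, U μ w (Function.update π j k') j ≤ U μ w π j

/-- homogeneous resources (all payoffs equal): a valid improvement step of
player `j` from `k` to `k'` satisfies `W_k(π')/W_k(π) > W_{k'}(π)/W_{k'}(π')`, the
denominators being positive. -/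
theorem stmt18 {N K : ℕ} (hN : 2 ≤ N) (hK : 2 ≤ K)
    (μ : Fin K → ℝ) (w : Fin N → Fin K → ℝ)
    (hμ : ∀ k, 0 < μ k ∧ μ k ≤ 1) (hw : ∀ j k, 0 ≤ w j k ∧ w j k ≤ 1)
    (heq : ∀ k k' : Fin K, μ k = μ k')
    (π π' : Fin N → Fin K) (j : Fin N) (k k' : Fin K)
    (hk : π j = k) (hkk' : k ≠ k') (hdev : π' = Function.update π j k')
    (hwjk : 0 < w j k) (hwjk' : 0 < w j k')
    (himp : U μ w π' j > U μ w π j) :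
    0 < Wt w π k ∧ 0 < Wt w π' k' ∧
      Wt w π' k / Wt w π k > Wt w π k' / Wt w π' k' := by
  have hπ'j : π' j = k' := by rw [hdev]; simp
  have hπ'ne : ∀ i : Fin N, i ≠ j → π' i = π i := by
    intro i hi; rw [hdev]; exact Function.update_of_ne hi _ _
  -- positivity of Wt w π k
  have hWk : 0 < Wt w π k := by
    have hle : w j k ≤ Wt w π k := by
      have := Finset.single_le_sum (f := fun i : Fin N => if π i = k then w i k else 0)
        (fun i _ => by split_ifs <;> simp [(hw i k).1]) (Finset.mem_univ j)
      simpa [Wt, hk] using this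
    linarith
  have hWk' : 0 < Wt w π' k' := by
    have hle : w j k' ≤ Wt w π' k' := by
      have := Finset.single_le_sum (f := fun i : Fin N => if π' i = k' then w i k' else 0)
        (fun i _ => by split_ifs <;> simp [(hw i k').1]) (Finset.mem_univ j)
      simpa [Wt, hπ'j] using this
    linarith
  -- weight identities
  have h1 : Wt w π' k = Wt w π k - w j k := by
    unfold Wt
    rw [Fintype.sum_eq_add_sum_compl j, Fintype.sum_eq_add_sum_compl j]
    have hsum : ∑ i ∈ {j}ᶜ, (if π' i = k then w i k else 0)
        = ∑ i ∈ {j}ᶜ, (if π i = k then w i k else 0) := by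
      apply Finset.sum_congr rfl
      intro i hi
      rw [hπ'ne i (by simpa using hi)]
    rw [hsum, hπ'j, hk]
    simp [Ne.symm hkk']
    try ring
  have h2 : Wt w π' k' = Wt w π k' + w j k' := by
    unfold Wt
    rw [Fintype.sum_eq_add_sum_compl j, Fintype.sum_eq_add_sum_compl j]
    have hsum : ∑ i ∈ {j}ᶜ, (if π' i = k' then w i k' else 0)
        = ∑ i ∈ {j}ᶜ, (if π i = k' then w i k' else 0) := by
      apply Finset.sum_congr rfl
      intro i hi
      rw [hπ'ne i (by simpa using hi)]
    rw [hsum, hπ'j, hk]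
    simp [hkk']
    try ring
  -- improvement inequality
  have key : w j k / Wt w π k < w j k' / Wt w π' k' := by
    have h := himp
    rw [U, U, hk, hπ'j, if_pos hWk, if_pos hWk'] at h
    rw [← heq k k', mul_div_assoc, mul_div_assoc] at h
    exact (mul_lt_mul_iff_right₀ (hμ k).1).mp h
  refine ⟨hWk, hWk', ?_⟩
  rw [h1, show Wt w π k' = Wt w π' k' - w j k' by linarith]
  rw [sub_div, sub_div, div_self hWk.ne', div_self hWk'.ne']
  linarith
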